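/- For every real u > 1 there exists exactly one real ξ ≠ 0 with exp(ξ) = 1 + u·ξ, and this solution satisfies log(u) < ξ ≤ 2·log(u). -/

import Mathlib

/-- For every real `u > 1` there is exactly one real `ξ ≠ 0` with
`exp ξ = 1 + u ξ`, and this solution satisfies `log u < ξ ≤ 2 log u`. -/
theorem stmt_5 (u : ℝ) (hu : 1 < u) :
    (∃! ξ : ℝ, ξ ≠ 0 ∧ Real.exp ξ = 1 + u * ξ) ∧
    (∀ ξ : ℝ, ξ ≠ 0 → Real.exp ξ = 1 + u * ξ →
      Real.log u < ξ ∧ ξ ≤ 2 * Real.log u) := by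
  have hupos : (0:ℝ) < u := lt_trans one_pos hu
  have hlogpos := Real.log_pos hu
  have h1 : Real.exp (Real.log u) = u := Real.exp_log hupos
  -- strict monotonicity of (exp x - 1)/x
  have hgmono : ∀ x y : ℝ, x ≠ 0 → y ≠ 0 → x < y →
      (Real.exp x - 1)/x < (Real.exp y - 1)/y := by
    intro x y hx hy hxy
    have := strictConvexOn_exp.secant_strict_mono (Set.mem_univ 0) (Set.mem_univ x)
      (Set.mem_univ y) hx hy hxy
    simpa using this
  have hroot_g : ∀ ξ : ℝ, ξ ≠ 0 → Real.exp ξ = 1 + u * ξ → (Real.exp ξ - 1)/ξ = u := by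
    intro ξ hξ h
    rw [h]
    field_simp
    ring
  have huniq : ∀ a b : ℝ, a ≠ 0 → Real.exp a = 1 + u * a → b ≠ 0 →
      Real.exp b = 1 + u * b → a = b := by
    intro a b ha hfa hb hfb
    by_contra hne
    rcases lt_or_gt_of_ne hne with h | h
    · have h2 := hgmono a b ha hb h
      rw [hroot_g a ha hfa, hroot_g b hb hfb] at h2
      exact lt_irrefl _ h2
    · have h2 := hgmono b a hb ha h
      rw [hroot_g a ha hfa, hroot_g b hb hfb] at h2
      exact lt_irrefl _ h2
  -- value at log u is negative
  have hfa : Real.exp (Real.log u) - (1 + u * Real.log u) < 0 := by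
    have hinv : Real.log u⁻¹ < u⁻¹ - 1 :=
      Real.log_lt_sub_one_of_pos (inv_pos.2 hupos)
        (by
          intro h
          have : u = 1 := by field_simp at h; linarith
          linarith)
    rw [Real.log_inv] at hinv
    have huinv : u * u⁻¹ = 1 := mul_inv_cancel₀ (ne_of_gt hupos)
    rw [h1]
    nlinarith
  -- value at 2 log u is positive
  have hfb : 0 < Real.exp (2 * Real.log u) - (1 + u * (2 * Real.log u)) := by
    have hsinh : Real.log u < Real.sinh (Real.log u) :=
      Real.self_lt_sinh_iff.2 hlogpos
    rw [Real.sinh_eq, Real.exp_neg, h1] at hsinh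
    have h2 : Real.exp (2 * Real.log u) = u * u := by
      rw [two_mul, Real.exp_add, h1]
    have huinv : u * u⁻¹ = 1 := mul_inv_cancel₀ (ne_of_gt hupos)
    rw [h2]
    nlinarith
  -- existence via IVT
  have hab : Real.log u ≤ 2 * Real.log u := by linarith
  have hcont : ContinuousOn (fun x => Real.exp x - (1 + u * x))
      (Set.Icc (Real.log u) (2 * Real.log u)) :=
    (Real.continuous_exp.sub (continuous_const.add (continuous_const.mul continuous_id))).continuousOn
  obtain ⟨ξ, hξmem, hξ0⟩ := intermediate_value_Icc hab hcont ⟨le_of_lt hfa, le_of_lt hfb⟩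
  have hrootξ : Real.exp ξ = 1 + u * ξ := by
    have := sub_eq_zero.mp hξ0
    linarith [this]
  have hξgt : Real.log u < ξ := by
    rcases lt_or_eq_of_le hξmem.1 with h | h
    · exact h
    · exfalso
      rw [← h] at hξ0
      simp only [] at hξ0
      linarith
  have hξne : ξ ≠ 0 := ne_of_gt (lt_trans hlogpos hξgt)
  constructor
  · exact ⟨ξ, ⟨hξne, hrootξ⟩, fun y hy => huniq y ξ hy.1 hy.2 hξne hrootξ⟩
  · intro η hη hrootη
    have heq := huniq η ξ hη hrootη hξne hrootξ
    subst heq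
    exact ⟨hξgt, hξmem.2⟩
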